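/- Let p ≥ 1 and K, K₁,…,K_p be positive integers. For each i = 1,…,p let m_i ≥ 1 and let L^{(i)}₁,…,L^{(i)}_{m_i} and L̂^{(i)}₁,…,L̂^{(i)}_{m_i} be symmetric positive definite real K_i×K_i matrices, and let D^{(i)}₁(z) denote the head of the S-fraction backward recursion with these coefficients at the scalar z. Let Q_i ∈ ℝ^{K×K_i} be real matrices with Σ_{i=1}^p Q_iQ_iᵀ positive definite, and set M(z) = Σ_{i=1}^p Q_i D^{(i)}₁(z) Q_iᵀ. Then: (a) for every real z < 0, M(z) is symmetric positive definite, and hence M(z)⁻¹ is symmetric positive definite; (b) for every z ∈ ℂ with Im z > 0 (with the recursion taken over ℂ), i·(M(z) − M(z)ᴴ) is positive definite, M(z) is invertible, and i·((M(z)⁻¹)ᴴ − M(z)⁻¹) is positive definite, i.e., the imaginary part of M(z)⁻¹ is positive definite. -/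

import Mathlib

open Matrix
open scoped ComplexOrder

set_option linter.unusedSectionVars false
variable {n : Type*} [Fintype n] [DecidableEq n]

lemma qfH (A : Matrix n n ℂ) (x : n → ℂ) :
    star x ⬝ᵥ Aᴴ *ᵥ x = star (star x ⬝ᵥ A *ᵥ x) := by
  rw [Matrix.dotProduct_mulVec, ← Matrix.star_mulVec]
  rw [Matrix.star_dotProduct]


/-- imaginary part of the quadratic form is negative for nonzero vectors -/
def NegIm (A : Matrix n n ℂ) : Prop := ∀ x : n → ℂ, x ≠ 0 → (star x ⬝ᵥ A *ᵥ x).im < 0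

def PosIm (A : Matrix n n ℂ) : Prop := ∀ x : n → ℂ, x ≠ 0 → 0 < (star x ⬝ᵥ A *ᵥ x).im

lemma negIm_posDef {A : Matrix n n ℂ} (h : NegIm A) :
    (Complex.I • (A - Aᴴ)).PosDef := by
  rw [Matrix.posDef_iff_dotProduct_mulVec]
  constructor
  · rw [Matrix.IsHermitian]
    rw [Matrix.conjTranspose_smul, Matrix.conjTranspose_sub, Matrix.conjTranspose_conjTranspose]
    simp [Complex.star_def, Complex.conj_I, smul_sub]
    abel
  · intro x hx
    have hq := h x hx
    rw [Matrix.smul_mulVec, dotProduct_smul, Matrix.sub_mulVec,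
      dotProduct_sub, qfH]
    set q := star x ⬝ᵥ A *ᵥ x
    rw [Complex.lt_def]
    constructor
    · simp [Complex.ext_iff, Complex.sub_re, Complex.sub_im]
      nlinarith [hq]
    · simp [Complex.ext_iff]

lemma posIm_posDef {A : Matrix n n ℂ} (h : PosIm A) :
    (Complex.I • (Aᴴ - A)).PosDef := by
  have h' : NegIm (-A) := by
    intro x hx
    have := h x hx
    rw [Matrix.neg_mulVec, dotProduct_neg]
    simpa using this
  have := negIm_posDef h'
  simpa [sub_eq_add_neg, add_comm] using this

lemma isUnit_of_negIm {A : Matrix n n ℂ} (h : NegIm A) : IsUnit A := by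
  rw [Matrix.isUnit_iff_isUnit_det, isUnit_iff_ne_zero]
  intro hdet
  obtain ⟨v, hv, hAv⟩ := (Matrix.exists_mulVec_eq_zero_iff.mpr hdet)
  have := h v hv
  rw [hAv] at this
  simp at this

lemma isUnit_of_posIm {A : Matrix n n ℂ} (h : PosIm A) : IsUnit A := by
  rw [Matrix.isUnit_iff_isUnit_det, isUnit_iff_ne_zero]
  intro hdet
  obtain ⟨v, hv, hAv⟩ := (Matrix.exists_mulVec_eq_zero_iff.mpr hdet)
  have := h v hv
  rw [hAv] at this
  simp at this

lemma qf_inv {A : Matrix n n ℂ} (hA : IsUnit A) (x : n → ℂ) :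
    star x ⬝ᵥ A⁻¹ *ᵥ x = star (star ((A⁻¹)ᴴ *ᵥ x) ⬝ᵥ A *ᵥ ((A⁻¹)ᴴ *ᵥ x)) := by
  set y := (A⁻¹)ᴴ *ᵥ x with hy
  have h1 : star y = star x ᵥ* A⁻¹ := by
    rw [hy, Matrix.star_mulVec, Matrix.conjTranspose_conjTranspose]
  rw [h1, Matrix.mulVec_mulVec, ← Matrix.dotProduct_mulVec, Matrix.mulVec_mulVec]
  rw [← Matrix.mul_assoc, Matrix.nonsing_inv_mul A (by rwa [← Matrix.isUnit_iff_isUnit_det]),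
    Matrix.one_mul, ← qfH, Matrix.conjTranspose_conjTranspose]

lemma posIm_inv {A : Matrix n n ℂ} (h : NegIm A) : PosIm A⁻¹ := by
  intro x hx
  have hA := isUnit_of_negIm h
  have hy : (A⁻¹)ᴴ *ᵥ x ≠ 0 := by
    intro h0
    apply hx
    have hAH : IsUnit (A⁻¹)ᴴ := (Matrix.isUnit_conjTranspose _).mpr (Matrix.isUnit_nonsing_inv_iff.mpr hA)
    have := congrArg (fun v => ((A⁻¹)ᴴ)⁻¹ *ᵥ v) h0
    simpa [Matrix.mulVec_mulVec,
      Matrix.nonsing_inv_mul _ ((Matrix.isUnit_iff_isUnit_det _).mp hAH)] using this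
  rw [qf_inv hA x]
  have := h _ hy
  simpa using this

lemma negIm_inv {A : Matrix n n ℂ} (h : PosIm A) : NegIm A⁻¹ := by
  intro x hx
  have hA := isUnit_of_posIm h
  have hy : (A⁻¹)ᴴ *ᵥ x ≠ 0 := by
    intro h0
    apply hx
    have hAH : IsUnit (A⁻¹)ᴴ := (Matrix.isUnit_conjTranspose _).mpr (Matrix.isUnit_nonsing_inv_iff.mpr hA)
    have := congrArg (fun v => ((A⁻¹)ᴴ)⁻¹ *ᵥ v) h0
    simpa [Matrix.mulVec_mulVec,
      Matrix.nonsing_inv_mul _ ((Matrix.isUnit_iff_isUnit_det _).mp hAH)] using this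
  rw [qf_inv hA x]
  have := h _ hy
  simpa using this

lemma realMap_posDef {M : Matrix n n ℝ} (hM : M.PosDef) :
    (M.map Complex.ofReal).PosDef := by
  have hsym : ∀ j k, M j k = M k j := by
    intro j k
    conv_lhs => rw [← hM.1]
    simp [Matrix.conjTranspose_apply]
  rw [Matrix.posDef_iff_dotProduct_mulVec]
  constructor
  · exact hM.1.map Complex.ofReal (fun r => (Complex.conj_ofReal r).symm)
  intro x hx
  set a : n → ℝ := fun j => (x j).re with ha
  set b : n → ℝ := fun j => (x j).im with hb
  have expand : star x ⬝ᵥ (M.map Complex.ofReal) *ᵥ x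
      = ∑ j, ∑ k, (starRingEnd ℂ) (x j) * (Complex.ofReal (M j k) * x k) := by
    simp [dotProduct, Matrix.mulVec, Finset.mul_sum, Matrix.map_apply, Complex.star_def]
  have him : (star x ⬝ᵥ (M.map Complex.ofReal) *ᵥ x).im
      = (∑ j, ∑ k, M j k * (a j * b k)) - (∑ j, ∑ k, M j k * (b j * a k)) := by
    rw [expand, Complex.im_sum, ← Finset.sum_sub_distrib]
    refine Finset.sum_congr rfl fun j _ => ?_
    rw [Complex.im_sum, ← Finset.sum_sub_distrib]
    refine Finset.sum_congr rfl fun k _ => ?_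
    simp only [Complex.mul_im, Complex.mul_re, Complex.ofReal_re, Complex.ofReal_im,
      Complex.conj_re, Complex.conj_im, ha, hb]
    ring
  have hswap : (∑ j, ∑ k, M j k * (a j * b k)) = ∑ j, ∑ k, M j k * (b j * a k) := by
    rw [Finset.sum_comm]
    refine Finset.sum_congr rfl fun k _ => Finset.sum_congr rfl fun j _ => ?_
    rw [hsym j k]; ring
  have him0 : (star x ⬝ᵥ (M.map Complex.ofReal) *ᵥ x).im = 0 := by
    rw [him, hswap, sub_self]
  have hre : (star x ⬝ᵥ (M.map Complex.ofReal) *ᵥ x).re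
      = a ⬝ᵥ M *ᵥ a + b ⬝ᵥ M *ᵥ b := by
    rw [expand, Complex.re_sum]
    have : ∀ c : n → ℝ, c ⬝ᵥ M *ᵥ c = ∑ j, ∑ k, c j * (M j k * c k) := by
      intro c; simp [dotProduct, Matrix.mulVec, Finset.mul_sum]
    rw [this a, this b, ← Finset.sum_add_distrib]
    refine Finset.sum_congr rfl fun j _ => ?_
    rw [Complex.re_sum, ← Finset.sum_add_distrib]
    refine Finset.sum_congr rfl fun k _ => ?_
    simp only [Complex.mul_re, Complex.mul_im, Complex.ofReal_re, Complex.ofReal_im,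
      Complex.conj_re, Complex.conj_im, ha, hb]
    ring
  have hab : a ≠ 0 ∨ b ≠ 0 := by
    by_contra hcon
    push_neg at hcon
    apply hx
    funext j
    have h1 := congrFun hcon.1 j
    have h2 := congrFun hcon.2 j
    simp [ha, hb] at h1 h2
    exact Complex.ext h1 h2
  have hrepos : 0 < a ⬝ᵥ M *ᵥ a + b ⬝ᵥ M *ᵥ b := by
    rcases hab with h | h
    · have := hM.dotProduct_mulVec_pos h
      have h2 := hM.posSemidef.dotProduct_mulVec_nonneg b
      simp only [star_trivial] at this h2
      linarith [this, h2]
    · have := hM.dotProduct_mulVec_pos h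
      have h2 := hM.posSemidef.dotProduct_mulVec_nonneg a
      simp only [star_trivial] at this h2
      linarith [this, h2]
  rw [Complex.lt_def]
  constructor
  · rw [hre]; simpa using hrepos
  · rw [him0]; rfl

lemma im_qf_hermitian {A : Matrix n n ℂ} (hA : A.IsHermitian) (x : n → ℂ) :
    (star x ⬝ᵥ A *ᵥ x).im = 0 := by
  have h := qfH A x
  rw [hA.eq] at h
  have : (starRingEnd ℂ) (star x ⬝ᵥ A *ᵥ x) = star x ⬝ᵥ A *ᵥ x := h.symm
  rw [Complex.conj_eq_iff_im] at this
  exact this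

lemma negIm_sub_smul {A B : Matrix n n ℂ}
    (hA : ∀ x : n → ℂ, (star x ⬝ᵥ A *ᵥ x).im ≤ 0)
    (hB : B.PosDef) {w : ℂ} (hw : 0 < w.im) : NegIm (A - w • B) := by
  intro x hx
  rw [Matrix.sub_mulVec, dotProduct_sub, Matrix.smul_mulVec,
    dotProduct_smul]
  have hBq := hB.dotProduct_mulVec_pos hx
  rw [Complex.lt_def] at hBq
  have h1 : (w • (star x ⬝ᵥ B *ᵥ x)).im = w.im * (star x ⬝ᵥ B *ᵥ x).re := by
    rw [smul_eq_mul, Complex.mul_im, ← hBq.2]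
    simp
  rw [Complex.sub_im, h1]
  have := hA x
  have h2 : (0:ℝ) < (star x ⬝ᵥ B *ᵥ x).re := by simpa using hBq.1
  nlinarith

lemma posIm_add_herm {A B : Matrix n n ℂ} (hB : B.IsHermitian) (hA : PosIm A) :
    PosIm (B + A) := by
  intro x hx
  rw [Matrix.add_mulVec, dotProduct_add, Complex.add_im, im_qf_hermitian hB, zero_add]
  exact hA x hx

lemma negIm_im_nonpos {A : Matrix n n ℂ} (hA : NegIm A) (x : n → ℂ) :
    (star x ⬝ᵥ A *ᵥ x).im ≤ 0 := by
  by_cases hx : x = 0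
  · subst hx; simp
  · exact le_of_lt (hA x hx)

lemma down_ind {m : ℕ} (P : ℕ → Prop) (h1 : P m)
    (hstep : ∀ k, 1 ≤ k → k < m → P (k + 1) → P k) : ∀ k, 1 ≤ k → k ≤ m → P k := by
  have key : ∀ n k, 1 ≤ k → k ≤ m → m - k = n → P k := by
    intro n
    induction n with
    | zero => intro k hk1 hkm h; exact (by omega : k = m) ▸ h1
    | succ n ih =>
      intro k hk1 hkm h
      exact hstep k hk1 (by omega) (ih (k + 1) (by omega) (by omega) (by omega))
  exact fun k hk1 hkm => key (m - k) k hk1 hkm rfl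

/-- The complex cell recursion preserves NegIm downward. -/
lemma cell_negIm {m : ℕ} (hm : 1 ≤ m) (L Lhat : ℕ → Matrix n n ℝ)
    (hL : ∀ k, 1 ≤ k → k ≤ m → (L k).PosDef)
    (hLhat : ∀ k, 1 ≤ k → k ≤ m → (Lhat k).PosDef)
    {w : ℂ} (hw : 0 < w.im) (D : ℕ → Matrix n n ℂ)
    (hDm : D m = (L m).map Complex.ofReal - w • ((Lhat m).map Complex.ofReal)⁻¹)
    (hrec : ∀ k, 1 ≤ k → k < m →
      D k = (((L k).map Complex.ofReal)⁻¹ + (D (k + 1))⁻¹)⁻¹ -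
        w • ((Lhat k).map Complex.ofReal)⁻¹) :
    ∀ k, 1 ≤ k → k ≤ m → NegIm (D k) := by
  apply down_ind
  · rw [hDm]
    exact negIm_sub_smul
      (fun x => by rw [im_qf_hermitian (realMap_posDef (hL m hm le_rfl)).1 x])
      ((realMap_posDef (hLhat m hm le_rfl)).inv) hw
  · intro k hk1 hkm ih
    rw [hrec k hk1 hkm]
    have hLk : (((L k).map Complex.ofReal)⁻¹).PosDef :=
      (realMap_posDef (hL k hk1 (le_of_lt hkm))).inv
    have h2 : PosIm (D (k + 1))⁻¹ := posIm_inv ih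
    have h3 : PosIm (((L k).map Complex.ofReal)⁻¹ + (D (k + 1))⁻¹) :=
      posIm_add_herm hLk.1 h2
    have h4 : NegIm ((((L k).map Complex.ofReal)⁻¹ + (D (k + 1))⁻¹)⁻¹) := negIm_inv h3
    exact negIm_sub_smul (negIm_im_nonpos h4)
      ((realMap_posDef (hLhat k hk1 (le_of_lt hkm))).inv) hw

lemma qf_conj {m' : Type*} [Fintype m'] (C : Matrix m' n ℂ) (A : Matrix n n ℂ) (x : m' → ℂ) :
    star x ⬝ᵥ (C * A * Cᴴ) *ᵥ x = star (Cᴴ *ᵥ x) ⬝ᵥ A *ᵥ (Cᴴ *ᵥ x) := by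
  rw [Matrix.star_mulVec, Matrix.conjTranspose_conjTranspose, Matrix.mulVec_mulVec,
    Matrix.dotProduct_mulVec, Matrix.dotProduct_mulVec, Matrix.vecMul_vecMul,
    Matrix.mul_assoc]

lemma sum_mulVec' {R : Type*} [CommRing R] {ι : Type*} (s : Finset ι) {n' o' : Type*}
    [Fintype o'] (M : ι → Matrix n' o' R) (w : o' → R) :
    (∑ i ∈ s, M i) *ᵥ w = ∑ i ∈ s, M i *ᵥ w := by
  induction s using Finset.cons_induction with
  | empty => simp [Matrix.zero_mulVec]
  | cons a s ha ih => rw [Finset.sum_cons, Finset.sum_cons, Matrix.add_mulVec, ih]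

lemma dotProduct_sum' {R : Type*} [CommRing R] {ι : Type*} (s : Finset ι) {n' : Type*}
    [Fintype n'] (v : n' → R) (w : ι → n' → R) :
    v ⬝ᵥ (∑ i ∈ s, w i) = ∑ i ∈ s, v ⬝ᵥ w i := by
  induction s using Finset.cons_induction with
  | empty => simp
  | cons a s ha ih => rw [Finset.sum_cons, Finset.sum_cons, dotProduct_add, ih]

lemma map_transpose_ofReal {m' n' : Type*} (Q : Matrix m' n' ℝ) :
    (Q.map Complex.ofReal)ᵀ = (Q.map Complex.ofReal)ᴴ := by
  ext i j
  simp [Matrix.conjTranspose_apply, Matrix.transpose_apply, Matrix.map_apply,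
    Complex.star_def, Complex.conj_ofReal]

lemma qf_conjR {R : Type*} [CommRing R] [StarRing R] {m' n' : Type*} [Fintype m'] [Fintype n']
    (C : Matrix m' n' R) (A : Matrix n' n' R) (x : m' → R) :
    star x ⬝ᵥ (C * A * Cᴴ) *ᵥ x = star (Cᴴ *ᵥ x) ⬝ᵥ A *ᵥ (Cᴴ *ᵥ x) := by
  rw [Matrix.star_mulVec, Matrix.conjTranspose_conjTranspose, Matrix.mulVec_mulVec,
    Matrix.dotProduct_mulVec, Matrix.dotProduct_mulVec, Matrix.vecMul_vecMul,
    Matrix.mul_assoc]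

lemma posDef_smul_real {c : ℝ} (hc : 0 < c) {A : Matrix n n ℝ} (hA : A.PosDef) :
    (c • A).PosDef := by
  rw [Matrix.posDef_iff_dotProduct_mulVec]
  constructor
  · unfold Matrix.IsHermitian
    rw [Matrix.conjTranspose_smul, hA.1.eq, star_trivial]
  · intro x hx
    rw [Matrix.smul_mulVec, dotProduct_smul, smul_eq_mul]
    exact mul_pos hc (hA.dotProduct_mulVec_pos hx)

lemma cell_posDef {m : ℕ} (hm : 1 ≤ m) (L Lhat : ℕ → Matrix n n ℝ)
    (hL : ∀ k, 1 ≤ k → k ≤ m → (L k).PosDef)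
    (hLhat : ∀ k, 1 ≤ k → k ≤ m → (Lhat k).PosDef)
    {z : ℝ} (hz : z < 0) (D : ℕ → Matrix n n ℝ)
    (hDm : D m = L m - z • (Lhat m)⁻¹)
    (hrec : ∀ k, 1 ≤ k → k < m → D k = ((L k)⁻¹ + (D (k + 1))⁻¹)⁻¹ - z • (Lhat k)⁻¹) :
    ∀ k, 1 ≤ k → k ≤ m → (D k).PosDef := by
  apply down_ind
  · rw [hDm, sub_eq_add_neg, ← neg_smul]
    exact (hL m hm le_rfl).add (posDef_smul_real (by linarith) (hLhat m hm le_rfl).inv)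
  · intro k hk1 hkm ih
    rw [hrec k hk1 hkm, sub_eq_add_neg, ← neg_smul]
    exact (((hL k hk1 (le_of_lt hkm)).inv.add ih.inv).inv).add
      (posDef_smul_real (by linarith) (hLhat k hk1 (le_of_lt hkm)).inv)

section assembled
variable {p K : ℕ} {Ki : Fin p → ℕ} (Q : (i : Fin p) → Matrix (Fin K) (Fin (Ki i)) ℝ)

lemma exists_mulVec_ne_zero_real
    (hQ : (∑ i, Q i * (Q i)ᵀ).PosDef) (x : Fin K → ℝ) (hx : x ≠ 0) :
    ∃ i, (Q i)ᵀ *ᵥ x ≠ 0 := by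
  by_contra hcon
  push_neg at hcon
  have h0 := hQ.dotProduct_mulVec_pos hx
  have hz : star x ⬝ᵥ (∑ i, Q i * (Q i)ᵀ) *ᵥ x = 0 := by
    rw [sum_mulVec', dotProduct_sum']
    refine Finset.sum_eq_zero fun i _ => ?_
    rw [show Q i * (Q i)ᵀ = Q i * (1 : Matrix (Fin (Ki i)) (Fin (Ki i)) ℝ) * (Q i)ᴴ by
        rw [Matrix.mul_one, Matrix.conjTranspose_eq_transpose_of_trivial],
      qf_conjR, Matrix.conjTranspose_eq_transpose_of_trivial, hcon i]
    simp
  rw [hz] at h0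
  exact lt_irrefl _ h0

lemma real_assembled (hQ : (∑ i, Q i * (Q i)ᵀ).PosDef)
    (A : (i : Fin p) → Matrix (Fin (Ki i)) (Fin (Ki i)) ℝ) (hA : ∀ i, (A i).PosDef) :
    (∑ i, Q i * A i * (Q i)ᵀ).PosDef := by
  have hherm : ∀ i, (Q i * A i * (Q i)ᵀ).IsHermitian := fun i => by
    rw [← Matrix.conjTranspose_eq_transpose_of_trivial]
    exact Matrix.isHermitian_mul_mul_conjTranspose (Q i) (hA i).1
  rw [Matrix.posDef_iff_dotProduct_mulVec]
  constructor
  · unfold Matrix.IsHermitian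
    rw [Matrix.conjTranspose_sum]
    exact Finset.sum_congr rfl fun i _ => hherm i
  · intro x hx
    obtain ⟨i0, hi0⟩ := exists_mulVec_ne_zero_real Q hQ x hx
    rw [sum_mulVec', dotProduct_sum']
    have key : ∀ i, star x ⬝ᵥ (Q i * A i * (Q i)ᵀ) *ᵥ x
        = star ((Q i)ᵀ *ᵥ x) ⬝ᵥ A i *ᵥ ((Q i)ᵀ *ᵥ x) := fun i => by
      conv_lhs => rw [← Matrix.conjTranspose_eq_transpose_of_trivial]
      rw [qf_conjR (Q i) (A i) x, Matrix.conjTranspose_eq_transpose_of_trivial]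
    have : ∑ _i : Fin p, (0:ℝ) < ∑ i, star x ⬝ᵥ (Q i * A i * (Q i)ᵀ) *ᵥ x := by
      refine Finset.sum_lt_sum (fun i _ => ?_) ⟨i0, Finset.mem_univ _, ?_⟩
      · rw [key i]; exact (hA i).posSemidef.dotProduct_mulVec_nonneg _
      · rw [key i0]; exact (hA i0).dotProduct_mulVec_pos hi0
    simpa using this

lemma exists_mulVec_ne_zero_complex
    (hQ : (∑ i, Q i * (Q i)ᵀ).PosDef) (x : Fin K → ℂ) (hx : x ≠ 0) :
    ∃ i, ((Q i).map Complex.ofReal)ᴴ *ᵥ x ≠ 0 := by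
  by_contra hcon
  push_neg at hcon
  have hQC := realMap_posDef hQ
  have hmap : ((∑ i, Q i * (Q i)ᵀ).map Complex.ofReal)
      = ∑ i, ((Q i).map Complex.ofReal) * ((Q i).map Complex.ofReal)ᴴ := by
    ext a b
    simp [Matrix.map_apply, Matrix.sum_apply, Matrix.mul_apply, Matrix.conjTranspose_apply,
      Matrix.transpose_apply, Complex.conj_ofReal]
  have h0 := hQC.dotProduct_mulVec_pos hx
  rw [hmap] at h0
  have hz : star x ⬝ᵥ (∑ i, ((Q i).map Complex.ofReal) * ((Q i).map Complex.ofReal)ᴴ) *ᵥ x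
      = 0 := by
    rw [sum_mulVec', dotProduct_sum']
    refine Finset.sum_eq_zero fun i _ => ?_
    rw [show ((Q i).map Complex.ofReal) * ((Q i).map Complex.ofReal)ᴴ
        = ((Q i).map Complex.ofReal) * (1 : Matrix (Fin (Ki i)) (Fin (Ki i)) ℂ) * ((Q i).map Complex.ofReal)ᴴ by rw [Matrix.mul_one],
      qf_conjR, hcon i]
    simp
  rw [hz] at h0
  exact lt_irrefl _ h0

lemma negIm_assembled (hQ : (∑ i, Q i * (Q i)ᵀ).PosDef)
    (A : (i : Fin p) → Matrix (Fin (Ki i)) (Fin (Ki i)) ℂ) (hA : ∀ i, NegIm (A i)) :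
    NegIm (∑ i, (Q i).map Complex.ofReal * A i * ((Q i).map Complex.ofReal)ᴴ) := by
  intro x hx
  obtain ⟨i0, hi0⟩ := exists_mulVec_ne_zero_complex Q hQ x hx
  rw [sum_mulVec', dotProduct_sum', Complex.im_sum]
  have : ∑ i, (star x ⬝ᵥ ((Q i).map Complex.ofReal * A i * ((Q i).map Complex.ofReal)ᴴ) *ᵥ x).im
      < ∑ i : Fin p, (0:ℝ) := by
    refine Finset.sum_lt_sum (fun i _ => ?_) ⟨i0, Finset.mem_univ _, ?_⟩
    · rw [qf_conjR]; exact negIm_im_nonpos (hA i) _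
    · rw [qf_conjR]; exact hA i0 _ hi0
  simpa using this

end assembled

theorem stmt19 {p K : ℕ} (hp : 0 < p) (hK : 0 < K)
    (Ki : Fin p → ℕ) (hKi : ∀ i, 0 < Ki i)
    (m : Fin p → ℕ) (hm : ∀ i, 1 ≤ m i)
    (L Lhat : (i : Fin p) → ℕ → Matrix (Fin (Ki i)) (Fin (Ki i)) ℝ)
    (hL : ∀ i k, 1 ≤ k → k ≤ m i → (L i k).PosDef)
    (hLhat : ∀ i k, 1 ≤ k → k ≤ m i → (Lhat i k).PosDef)
    (Q : (i : Fin p) → Matrix (Fin K) (Fin (Ki i)) ℝ)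
    (hQ : (∑ i, Q i * (Q i)ᵀ).PosDef) :
    -- (a) negative real axis
    (∀ z : ℝ, z < 0 →
      ∀ D : (i : Fin p) → ℕ → Matrix (Fin (Ki i)) (Fin (Ki i)) ℝ,
        (∀ i, D i (m i) = L i (m i) - z • (Lhat i (m i))⁻¹) →
        (∀ i k, 1 ≤ k → k < m i →
          D i k = ((L i k)⁻¹ + (D i (k + 1))⁻¹)⁻¹ - z • (Lhat i k)⁻¹) →
        (∑ i, Q i * D i 1 * (Q i)ᵀ).PosDef ∧
        ((∑ i, Q i * D i 1 * (Q i)ᵀ)⁻¹).PosDef) ∧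
    -- (b) upper half plane
    (∀ w : ℂ, 0 < w.im →
      ∀ D : (i : Fin p) → ℕ → Matrix (Fin (Ki i)) (Fin (Ki i)) ℂ,
        (∀ i, D i (m i) = (L i (m i)).map Complex.ofReal -
          w • ((Lhat i (m i)).map Complex.ofReal)⁻¹) →
        (∀ i k, 1 ≤ k → k < m i →
          D i k = (((L i k).map Complex.ofReal)⁻¹ + (D i (k + 1))⁻¹)⁻¹ -
            w • ((Lhat i k).map Complex.ofReal)⁻¹) →
        (Complex.I •
          ((∑ i, (Q i).map Complex.ofReal * D i 1 * ((Q i).map Complex.ofReal)ᵀ) -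
           (∑ i, (Q i).map Complex.ofReal * D i 1 * ((Q i).map Complex.ofReal)ᵀ)ᴴ)).PosDef ∧
        IsUnit (∑ i, (Q i).map Complex.ofReal * D i 1 * ((Q i).map Complex.ofReal)ᵀ) ∧
        (Complex.I •
          (((∑ i, (Q i).map Complex.ofReal * D i 1 * ((Q i).map Complex.ofReal)ᵀ)⁻¹)ᴴ -
           (∑ i, (Q i).map Complex.ofReal * D i 1 * ((Q i).map Complex.ofReal)ᵀ)⁻¹)).PosDef) := by
  constructor
  · intro z hz D hDm hrec
    have hD1 : ∀ i, (D i 1).PosDef := fun i =>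
      cell_posDef (hm i) (L i) (Lhat i) (hL i) (hLhat i) hz (D i) (hDm i) (hrec i) 1 le_rfl (hm i)
    have hM := real_assembled Q hQ (fun i => D i 1) hD1
    exact ⟨hM, hM.inv⟩
  · intro w hw D hDm hrec
    have hD1 : ∀ i, NegIm (D i 1) := fun i =>
      cell_negIm (hm i) (L i) (Lhat i) (hL i) (hLhat i) hw (D i) (hDm i) (hrec i) 1 le_rfl (hm i)
    have hNeg : NegIm (∑ i, (Q i).map Complex.ofReal * D i 1 * ((Q i).map Complex.ofReal)ᵀ) := by
      simp only [map_transpose_ofReal]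
      exact negIm_assembled Q hQ _ hD1
    refine ⟨negIm_posDef hNeg, isUnit_of_negIm hNeg, posIm_posDef (posIm_inv hNeg)⟩
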